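/- Let n ≥ 1 and for each i ∈ Fin n let Xᵢ be a measurable space carrying two probability measures πᵢ and μᵢ. For a subset c ⊆ Fin n let π^c denote the product measure Measure.pi of the family equal to πᵢ for i ∈ c and μᵢ for i ∉ c. Let p₁, …, pₙ be nonnegative reals with ∑ₖ pₖ = 1, and define the PAR mixture measure M = ∑ₖ pₖ · (1/(n choose k)) · ∑_{c ∈ powersetCard k (univ)} π^c. Then TV(M, Measure.pi μ) ≤ (∑ₖ pₖ · k) · ((1/n) · ∑ᵢ TV(πᵢ, μᵢ)); that is, the total variation shift of the PAR mixture joint distribution from the behavior joint distribution is at most the expected number of deviating agents E[k] = ∑ₖ pₖ·k times the average single-agent policy deviation. -/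

import Mathlib

open MeasureTheory Finset

/-- The total variation distance between two measures: the supremum over
measurable sets of the absolute difference of the (real-valued) measures. -/
noncomputable def tvDist {X : Type*} [MeasurableSpace X]
    (p q : Measure X) : ℝ :=
  ⨆ A : {A : Set X // MeasurableSet A}, |(p A.1).toReal - (q A.1).toReal|

instance ite_measure_sigmaFinite {X : Type*} [MeasurableSpace X]
    (p : Prop) [Decidable p] (μ ν : Measure X)
    [SigmaFinite μ] [SigmaFinite ν] : SigmaFinite (if p then μ else ν) := by
  split <;> infer_instance

section Aux
variable {Y : Type*} [MeasurableSpace Y]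

lemma measure_toReal_le_one (p : Measure Y) [IsProbabilityMeasure p] (A : Set Y) :
    (p A).toReal ≤ 1 := by
  have h := ENNReal.toReal_mono (measure_ne_top p Set.univ) (measure_mono (Set.subset_univ A))
  simpa using h

lemma abs_measure_sub_le_tvDist (p q : Measure Y) [IsProbabilityMeasure p]
    [IsProbabilityMeasure q] {A : Set Y} (hA : MeasurableSet A) :
    |(p A).toReal - (q A).toReal| ≤ tvDist p q := by
  have hb : BddAbove (Set.range fun A : {A : Set Y // MeasurableSet A} =>
      |(p A.1).toReal - (q A.1).toReal|) := by
    refine ⟨1, ?_⟩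
    rintro _ ⟨B, rfl⟩
    have h1 := measure_toReal_le_one p B.1
    have h2 := measure_toReal_le_one q B.1
    have h3 : (0:ℝ) ≤ (p B.1).toReal := ENNReal.toReal_nonneg
    have h4 : (0:ℝ) ≤ (q B.1).toReal := ENNReal.toReal_nonneg
    rw [abs_sub_le_iff]
    constructor <;> linarith
  exact le_ciSup hb (⟨A, hA⟩ : {A : Set Y // MeasurableSet A})

lemma tvDist_nonneg (p q : Measure Y) [IsProbabilityMeasure p] [IsProbabilityMeasure q] :
    0 ≤ tvDist p q := by
  have h := abs_measure_sub_le_tvDist p q MeasurableSet.empty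
  simpa using h

lemma lintegral_abs_sub_le_tvDist (p q : Measure Y) [IsProbabilityMeasure p]
    [IsProbabilityMeasure q] (h : Y → ENNReal) (hm : Measurable h) (h1 : ∀ y, h y ≤ 1) :
    |(∫⁻ y, h y ∂p).toReal - (∫⁻ y, h y ∂q).toReal| ≤ tvDist p q := by
  classical
  set f : Y → ℝ := fun y => (h y).toReal with hf
  have hfm : Measurable f := hm.ennreal_toReal
  have hf0 : ∀ y, 0 ≤ f y := fun y => ENNReal.toReal_nonneg
  have hf1 : ∀ y, f y ≤ 1 := fun y => by
    simpa using ENNReal.toReal_mono (by simp) (h1 y)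
  have hof : ∀ y, ENNReal.ofReal (f y) = h y := fun y =>
    ENNReal.ofReal_toReal (ne_top_of_le_ne_top (by simp) (h1 y))
  have key : ∀ r : Measure Y, IsProbabilityMeasure r →
      ∫⁻ y, h y ∂r = ∫⁻ t in Set.Ioc (0:ℝ) 1, r {a | t ≤ f a} := by
    intro r hr
    have h0 : ∫⁻ y, h y ∂r = ∫⁻ y, ENNReal.ofReal (f y) ∂r := by
      simp_rw [hof]
    rw [h0, lintegral_eq_lintegral_meas_le r (ae_of_all _ hf0) hfm.aemeasurable]
    have hsplit : Set.Ioi (0:ℝ) = Set.Ioc (0:ℝ) 1 ∪ Set.Ioi (1:ℝ) :=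
      (Set.Ioc_union_Ioi_eq_Ioi zero_le_one).symm
    rw [hsplit, lintegral_union measurableSet_Ioi Set.Ioc_disjoint_Ioi_same]
    have hz : ∫⁻ t in Set.Ioi (1:ℝ), r {a | t ≤ f a} = 0 := by
      rw [setLIntegral_congr_fun measurableSet_Ioi ?_, lintegral_zero]
      intro t ht
      have : {a | t ≤ f a} = ∅ := by
        ext a; simp only [Set.mem_setOf_eq, Set.mem_empty_iff_false, iff_false, not_le]
        exact lt_of_le_of_lt (hf1 a) ht
      simp [this]
    rw [hz, add_zero]
  -- now convert to real integrals
  have hanti : ∀ r : Measure Y, Antitone (fun t : ℝ => r {a | t ≤ f a}) := by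
    intro r t s hts
    exact measure_mono (fun a ha => le_trans hts ha)
  have hmbl : ∀ r : Measure Y, Measurable (fun t : ℝ => r {a | t ≤ f a}) :=
    fun r => (hanti r).measurable
  have hfin : IsFiniteMeasure (volume.restrict (Set.Ioc (0:ℝ) 1)) := by
    constructor
    rw [Measure.restrict_apply_univ]
    simp
  have hint : ∀ r : Measure Y, IsProbabilityMeasure r →
      (∫⁻ y, h y ∂r).toReal = ∫ t in Set.Ioc (0:ℝ) 1, (r {a | t ≤ f a}).toReal := by
    intro r hr
    rw [key r hr]
    refine (integral_toReal ((hmbl r).aemeasurable) ?_).symm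
    exact ae_of_all _ fun t => lt_of_le_of_lt (prob_le_one) (by norm_num)
  have hintg : ∀ r : Measure Y, IsProbabilityMeasure r →
      Integrable (fun t : ℝ => (r {a | t ≤ f a}).toReal) (volume.restrict (Set.Ioc (0:ℝ) 1)) := by
    intro r hr
    refine ⟨((hmbl r).ennreal_toReal).aestronglyMeasurable, ?_⟩
    refine HasFiniteIntegral.of_bounded (C := 1) (ae_of_all _ fun t => ?_)
    rw [Real.norm_eq_abs, abs_of_nonneg ENNReal.toReal_nonneg]
    exact measure_toReal_le_one r _
  rw [hint p ‹_›, hint q ‹_›, ← integral_sub (hintg p ‹_›) (hintg q ‹_›)]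
  calc |∫ t in Set.Ioc (0:ℝ) 1, ((p {a | t ≤ f a}).toReal - (q {a | t ≤ f a}).toReal)|
      ≤ ∫ t in Set.Ioc (0:ℝ) 1, |(p {a | t ≤ f a}).toReal - (q {a | t ≤ f a}).toReal| :=
        by simpa [Real.norm_eq_abs] using norm_integral_le_integral_norm (μ := volume.restrict (Set.Ioc (0:ℝ) 1)) (fun t => (p {a | t ≤ f a}).toReal - (q {a | t ≤ f a}).toReal)
    _ ≤ ∫ _t in Set.Ioc (0:ℝ) 1, tvDist p q := by
        refine integral_mono (((hintg p ‹_›).sub (hintg q ‹_›)).abs) (integrable_const _) ?_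
        intro t
        exact abs_measure_sub_le_tvDist p q (hfm measurableSet_Ici)
    _ = tvDist p q := by
        rw [integral_const]
        simp

end Aux

section Prod
variable {Y Z : Type*} [MeasurableSpace Y] [MeasurableSpace Z]

lemma abs_prod_sub_le (k₁ k₂ : Measure Y) (r : Measure Z) [IsProbabilityMeasure k₁]
    [IsProbabilityMeasure k₂] [IsProbabilityMeasure r] {B : Set (Y × Z)}
    (hB : MeasurableSet B) :
    |((k₁.prod r) B).toReal - ((k₂.prod r) B).toReal| ≤ tvDist k₁ k₂ := by
  rw [Measure.prod_apply hB, Measure.prod_apply hB]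
  exact lintegral_abs_sub_le_tvDist k₁ k₂ _ (measurable_measure_prodMk_left hB)
    (fun y => prob_le_one)

lemma tvDist_le_map (u : Y ≃ᵐ Z) (k₁ k₂ : Measure Y) [IsProbabilityMeasure k₁]
    [IsProbabilityMeasure k₂] :
    tvDist k₁ k₂ ≤ tvDist (Measure.map u k₁) (Measure.map u k₂) := by
  haveI : IsProbabilityMeasure (Measure.map u k₁) :=
    Measure.isProbabilityMeasure_map u.measurable.aemeasurable
  haveI : IsProbabilityMeasure (Measure.map u k₂) :=
    Measure.isProbabilityMeasure_map u.measurable.aemeasurable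
  haveI : Nonempty {A : Set Y // MeasurableSet A} := ⟨⟨∅, MeasurableSet.empty⟩⟩
  refine ciSup_le fun A => ?_
  have hpre : ∀ k : Measure Y, k A.1 = (Measure.map u k) (u.symm ⁻¹' A.1) := by
    intro k
    rw [u.map_apply]
    congr 1
    ext x
    simp
  rw [hpre k₁, hpre k₂]
  exact abs_measure_sub_le_tvDist _ _ (u.symm.measurable A.2)

end Prod

lemma tvDist_pi_unique_le {I : Type*} [Fintype I] [Unique I] {P : I → Type*}
    [∀ i, MeasurableSpace (P i)] (f g : ∀ i, Measure (P i))
    [∀ i, IsProbabilityMeasure (f i)] [∀ i, IsProbabilityMeasure (g i)] :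
    tvDist (Measure.pi f) (Measure.pi g) ≤ tvDist (f default) (g default) := by
  refine (tvDist_le_map (MeasurableEquiv.piUnique P) _ _).trans ?_
  rw [(measurePreserving_piUnique f).map_eq, (measurePreserving_piUnique g).map_eq]

section OneCoord
variable {n : ℕ} {X : Fin n → Type*} [∀ i, MeasurableSpace (X i)]

lemma abs_pi_sub_pi_le (f g : ∀ i, Measure (X i)) [∀ i, IsProbabilityMeasure (f i)]
    [∀ i, IsProbabilityMeasure (g i)] (j : Fin n) (hfg : ∀ i, i ≠ j → f i = g i)
    {A : Set (∀ i, X i)} (hA : MeasurableSet A) :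
    |(Measure.pi f A).toReal - (Measure.pi g A).toReal| ≤ tvDist (f j) (g j) := by
  classical
  set e := MeasurableEquiv.piEquivPiSubtypeProd X (fun i => i = j) with he
  have happ : ∀ m : ∀ i, Measure (X i), [∀ i, SigmaFinite (m i)] →
      Measure.pi m A = (Measure.map e (Measure.pi m)) (e.symm ⁻¹' A) := by
    intro m _
    rw [MeasurableEquiv.map_apply]
    congr 1
    ext x
    simp
  rw [happ f, happ g, he,
    (measurePreserving_piEquivPiSubtypeProd f (fun i => i = j)).map_eq,
    (measurePreserving_piEquivPiSubtypeProd g (fun i => i = j)).map_eq]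
  have hrest : (fun i : {i // ¬ i = j} => g i.1) = (fun i : {i // ¬ i = j} => f i.1) :=
    funext fun i => (hfg i.1 i.2).symm
  rw [hrest]
  have hB : MeasurableSet ((MeasurableEquiv.piEquivPiSubtypeProd X
      (fun i => i = j)).symm ⁻¹' A) :=
    (MeasurableEquiv.piEquivPiSubtypeProd X (fun i => i = j)).symm.measurable hA
  refine (abs_prod_sub_le _ _ _ hB).trans ?_
  refine le_trans (@tvDist_pi_unique_le {i : Fin n // i = j} (Subtype.fintype _)
    inferInstance (fun i => X i.1) inferInstance (fun i => f i.1) (fun i => g i.1)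
    inferInstance inferInstance) ?_
  have hd : (default : {i : Fin n // i = j}) = ⟨j, rfl⟩ :=
    Subtype.ext (default : {i : Fin n // i = j}).2
  rw [hd]

end OneCoord

instance ite_measure_isProbabilityMeasure {X : Type*} [MeasurableSpace X]
    (p : Prop) [Decidable p] (μ ν : Measure X)
    [IsProbabilityMeasure μ] [IsProbabilityMeasure ν] :
    IsProbabilityMeasure (if p then μ else ν) := by
  split <;> infer_instance

lemma hybrid_bound {n : ℕ} {X : Fin n → Type*} [∀ i, MeasurableSpace (X i)]
    (π μ : ∀ i, Measure (X i)) [∀ i, IsProbabilityMeasure (π i)]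
    [∀ i, IsProbabilityMeasure (μ i)] (c : Finset (Fin n)) {A : Set (∀ i, X i)}
    (hA : MeasurableSet A) :
    |(Measure.pi (fun i => if i ∈ c then π i else μ i) A).toReal -
      (Measure.pi μ A).toReal| ≤ ∑ i ∈ c, tvDist (π i) (μ i) := by
  classical
  induction c using Finset.induction with
  | empty => simp
  | @insert j c hj ih =>
    have h1 : |(Measure.pi (fun i => if i ∈ insert j c then π i else μ i) A).toReal -
        (Measure.pi (fun i => if i ∈ c then π i else μ i) A).toReal| ≤
        tvDist (π j) (μ j) := by
      have h := abs_pi_sub_pi_le (fun i => if i ∈ insert j c then π i else μ i)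
        (fun i => if i ∈ c then π i else μ i) j
        (fun i hi => by simp [Finset.mem_insert, hi]) hA
      simpa [Finset.mem_insert_self, hj] using h
    rw [Finset.sum_insert hj]
    calc |(Measure.pi (fun i => if i ∈ insert j c then π i else μ i) A).toReal -
          (Measure.pi μ A).toReal|
        ≤ |(Measure.pi (fun i => if i ∈ insert j c then π i else μ i) A).toReal -
            (Measure.pi (fun i => if i ∈ c then π i else μ i) A).toReal| +
          |(Measure.pi (fun i => if i ∈ c then π i else μ i) A).toReal -
            (Measure.pi μ A).toReal| := abs_sub_le _ _ _
      _ ≤ tvDist (π j) (μ j) + ∑ i ∈ c, tvDist (π i) (μ i) := add_le_add h1 ih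

lemma card_filter_mem_powersetCard {n k : ℕ} (hk : 1 ≤ k) (i : Fin n) :
    ((powersetCard k (univ : Finset (Fin n))).filter (fun c => i ∈ c)).card =
      (n - 1).choose (k - 1) := by
  classical
  have hcard : ((univ : Finset (Fin n)).erase i).card = n - 1 := by
    rw [card_erase_of_mem (mem_univ i), card_univ, Fintype.card_fin]
  rw [← hcard, ← card_powersetCard (k - 1) ((univ : Finset (Fin n)).erase i)]
  apply Finset.card_bij' (fun c _ => c.erase i) (fun d _ => insert i d)
  · intro c hc
    rw [mem_filter] at hc
    exact insert_erase hc.2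
  · intro d hd
    rw [mem_powersetCard] at hd
    have hi : i ∉ d := fun h => (notMem_erase i _) (hd.1 h)
    exact erase_insert hi
  · intro c hc
    rw [mem_filter, mem_powersetCard] at hc
    rw [mem_powersetCard]
    exact ⟨erase_subset_erase i (hc.1.1), by rw [card_erase_of_mem hc.2, hc.1.2]⟩
  · intro d hd
    rw [mem_powersetCard] at hd
    have hi : i ∉ d := fun h => (notMem_erase i _) (hd.1 h)
    rw [mem_filter, mem_powersetCard]
    refine ⟨⟨subset_univ _, ?_⟩, mem_insert_self i d⟩
    rw [card_insert_of_notMem hi, hd.2]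
    omega

lemma sum_powersetCard_sum_mem {n k : ℕ} (hk : 1 ≤ k) (t : Fin n → ℝ) :
    ∑ c ∈ powersetCard k (univ : Finset (Fin n)), ∑ i ∈ c, t i =
      ((n - 1).choose (k - 1) : ℝ) * ∑ i, t i := by
  classical
  have h1 : ∀ c ∈ powersetCard k (univ : Finset (Fin n)),
      ∑ i ∈ c, t i = ∑ i : Fin n, if i ∈ c then t i else 0 := by
    intro c _
    rw [Finset.sum_ite_mem]
    congr 1
    exact (Finset.univ_inter c).symm ▸ rfl
  rw [Finset.sum_congr rfl h1, Finset.sum_comm]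
  have h2 : ∀ i : Fin n, ∑ c ∈ powersetCard k (univ : Finset (Fin n)),
      (if i ∈ c then t i else 0) = ((n - 1).choose (k - 1) : ℝ) * t i := by
    intro i
    rw [Finset.sum_ite, Finset.sum_const, Finset.sum_const_zero, add_zero,
      card_filter_mem_powersetCard hk i, nsmul_eq_mul]
  rw [Finset.sum_congr rfl (fun i _ => h2 i), ← Finset.mul_sum]

/-- The PLCQL distribution-shift bound: the total variation distance of the
PAR mixture joint distribution (sample a subset size `k` with probability
`p k`, then a uniform `k`-element subset whose agents use the learned policies
`π i`, while the rest keep the behavior policies `μ i`) from the behavior joint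
distribution is at most the expected number of deviating agents `∑ₖ pₖ·k`
times the average single-agent policy deviation `(1/n) ∑ᵢ TV(πᵢ, μᵢ)`. -/
theorem tvDist_PAR_mixture_le {n : ℕ} (hn : 1 ≤ n) {X : Fin n → Type*}
    [∀ i, MeasurableSpace (X i)]
    (π μ : ∀ i, Measure (X i))
    [∀ i, IsProbabilityMeasure (π i)] [∀ i, IsProbabilityMeasure (μ i)]
    (p : ℕ → ℝ) (hp0 : ∀ k ∈ Icc 1 n, 0 ≤ p k)
    (hp1 : ∑ k ∈ Icc 1 n, p k = 1) :
    tvDist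
      (∑ k ∈ Icc 1 n,
        ENNReal.ofReal (p k * (1 / (n.choose k : ℝ))) •
          ∑ c ∈ powersetCard k (univ : Finset (Fin n)),
            Measure.pi (fun i => if i ∈ c then π i else μ i))
      (Measure.pi μ) ≤
    (∑ k ∈ Icc 1 n, p k * (k : ℝ)) *
      ((1 / (n : ℝ)) * ∑ i, tvDist (π i) (μ i)) := by
  classical
  set T : ℝ := ∑ i, tvDist (π i) (μ i) with hT
  set r : ℕ → ℝ := fun k => p k * (1 / (n.choose k : ℝ)) with hr
  have hn0 : (n : ℝ) ≠ 0 := Nat.cast_ne_zero.mpr (by omega)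
  have hC : ∀ k ∈ Icc 1 n, (n.choose k : ℝ) ≠ 0 := by
    intro k hk
    rw [mem_Icc] at hk
    exact Nat.cast_ne_zero.mpr (Nat.choose_pos hk.2).ne'
  have hr0 : ∀ k ∈ Icc 1 n, 0 ≤ r k := by
    intro k hk
    exact mul_nonneg (hp0 k hk) (by positivity)
  haveI : Nonempty {A : Set (∀ i, X i) // MeasurableSet A} := ⟨⟨∅, MeasurableSet.empty⟩⟩
  refine ciSup_le fun A => ?_
  obtain ⟨A, hA⟩ := A
  simp only []
  set v : ℝ := (Measure.pi μ A).toReal with hv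
  -- Step 1: the mixture applied to A, in real form
  have hMA : ((∑ k ∈ Icc 1 n,
        ENNReal.ofReal (r k) •
          ∑ c ∈ powersetCard k (univ : Finset (Fin n)),
            Measure.pi (fun i => if i ∈ c then π i else μ i)) A).toReal =
      ∑ k ∈ Icc 1 n, r k * ∑ c ∈ powersetCard k (univ : Finset (Fin n)),
        (Measure.pi (fun i => if i ∈ c then π i else μ i) A).toReal := by
    rw [Measure.finset_sum_apply]
    have h1 : ∀ k ∈ Icc 1 n,
        (ENNReal.ofReal (r k) • ∑ c ∈ powersetCard k (univ : Finset (Fin n)),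
          Measure.pi (fun i => if i ∈ c then π i else μ i)) A =
        ENNReal.ofReal (r k) * ∑ c ∈ powersetCard k (univ : Finset (Fin n)),
          Measure.pi (fun i => if i ∈ c then π i else μ i) A := by
      intro k _
      rw [Measure.smul_apply, Measure.finset_sum_apply, smul_eq_mul]
    rw [Finset.sum_congr rfl h1, ENNReal.toReal_sum]
    · refine Finset.sum_congr rfl fun k hk => ?_
      rw [ENNReal.toReal_mul, ENNReal.toReal_ofReal (hr0 k hk),
        ENNReal.toReal_sum (fun c _ => measure_ne_top _ _)]
    · intro k hk
      exact ENNReal.mul_ne_top ENNReal.ofReal_ne_top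
        (ENNReal.sum_lt_top.mpr (fun c _ => measure_lt_top _ _)).ne
  -- Step 2: v as a matching sum
  have hvA : v = ∑ k ∈ Icc 1 n, r k *
      ∑ _c ∈ powersetCard k (univ : Finset (Fin n)), v := by
    have h2 : ∀ k ∈ Icc 1 n, r k *
        ∑ _c ∈ powersetCard k (univ : Finset (Fin n)), v = p k * v := by
      intro k hk
      rw [Finset.sum_const, card_powersetCard, card_univ, Fintype.card_fin, nsmul_eq_mul,
        hr]
      field_simp [hC k hk]
    rw [Finset.sum_congr rfl h2, ← Finset.sum_mul, hp1, one_mul]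
  rw [hMA]
  conv_lhs => rw [hvA]
  rw [← Finset.sum_sub_distrib]
  have h3 : ∀ k ∈ Icc 1 n,
      r k * ∑ c ∈ powersetCard k (univ : Finset (Fin n)),
        (Measure.pi (fun i => if i ∈ c then π i else μ i) A).toReal -
      r k * ∑ _c ∈ powersetCard k (univ : Finset (Fin n)), v =
      r k * ∑ c ∈ powersetCard k (univ : Finset (Fin n)),
        ((Measure.pi (fun i => if i ∈ c then π i else μ i) A).toReal - v) := by
    intro k _
    rw [← mul_sub, ← Finset.sum_sub_distrib]
  rw [Finset.sum_congr rfl h3]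
  calc |∑ k ∈ Icc 1 n, r k * ∑ c ∈ powersetCard k (univ : Finset (Fin n)),
        ((Measure.pi (fun i => if i ∈ c then π i else μ i) A).toReal - v)|
      ≤ ∑ k ∈ Icc 1 n, |r k * ∑ c ∈ powersetCard k (univ : Finset (Fin n)),
        ((Measure.pi (fun i => if i ∈ c then π i else μ i) A).toReal - v)| :=
        Finset.abs_sum_le_sum_abs _ _
    _ ≤ ∑ k ∈ Icc 1 n, r k * (((n - 1).choose (k - 1) : ℝ) * T) := by
        refine Finset.sum_le_sum fun k hk => ?_
        rw [abs_mul, abs_of_nonneg (hr0 k hk)]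
        refine mul_le_mul_of_nonneg_left ?_ (hr0 k hk)
        calc |∑ c ∈ powersetCard k (univ : Finset (Fin n)),
              ((Measure.pi (fun i => if i ∈ c then π i else μ i) A).toReal - v)|
            ≤ ∑ c ∈ powersetCard k (univ : Finset (Fin n)),
              |(Measure.pi (fun i => if i ∈ c then π i else μ i) A).toReal - v| :=
              Finset.abs_sum_le_sum_abs _ _
          _ ≤ ∑ c ∈ powersetCard k (univ : Finset (Fin n)),
              ∑ i ∈ c, tvDist (π i) (μ i) :=
              Finset.sum_le_sum fun c _ => hybrid_bound π μ c hA
          _ = ((n - 1).choose (k - 1) : ℝ) * T :=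
              sum_powersetCard_sum_mem (mem_Icc.mp hk).1 _
    _ = (∑ k ∈ Icc 1 n, p k * (k : ℝ)) * ((1 / (n : ℝ)) * T) := by
        rw [Finset.sum_mul]
        refine Finset.sum_congr rfl fun k hk => ?_
        rw [mem_Icc] at hk
        have hnat : (n : ℝ) * ((n - 1).choose (k - 1) : ℝ) = (n.choose k : ℝ) * (k : ℝ) := by
          have := Nat.add_one_mul_choose_eq (n - 1) (k - 1)
          have h1 : n - 1 + 1 = n := by omega
          have h2 : k - 1 + 1 = k := by omega
          simp only [Nat.succ_eq_add_one, h1, h2] at this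
          exact_mod_cast congrArg (Nat.cast : ℕ → ℝ) this
        have hCk : (n.choose k : ℝ) ≠ 0 := hC k (mem_Icc.mpr hk)
        rw [hr]
        field_simp
        linear_combination p k * T * hnat
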